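/- For every real η > 0, 1 − η·ln(1 + 1/η) > η·((1 + 2η)·ln(1 + 1/η) − 2). -/

import Mathlib

open Real Set in
lemma log_lt_sharp {x : ℝ} (hx : 0 < x) :
    Real.log (1 + x) < x * (2 + x) / (2 * (1 + x)) := by
  set f : ℝ → ℝ := fun y => y * (2 + y) / (2 * (1 + y)) - Real.log (1 + y) with hf
  have key : StrictMonoOn f (Ici (0:ℝ)) := by
    apply strictMonoOn_of_deriv_pos (convex_Ici 0)
    · apply ContinuousOn.sub
      · apply ContinuousOn.div (by fun_prop) (by fun_prop)
        intro y hy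
        simp at hy; nlinarith
      · apply ContinuousOn.log (by fun_prop)
        intro y hy
        simp at hy; nlinarith
    · intro y hy
      rw [interior_Ici] at hy
      simp only [mem_Ioi] at hy
      have h1y : (0:ℝ) < 1 + y := by linarith
      have hd : HasDerivAt f (y ^ 2 / (2 * (1 + y) ^ 2)) y := by
        have hnum : HasDerivAt (fun y : ℝ => y * (2 + y)) (1 * (2 + y) + y * 1) y := by
          exact ((hasDerivAt_id y).mul ((hasDerivAt_const y 2).add (hasDerivAt_id y))).congr_deriv (by simp only [Pi.add_apply, id]; ring)
        have hden : HasDerivAt (fun y : ℝ => 2 * (1 + y)) (2 * 1) y := by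
          simpa using ((hasDerivAt_const y 1).add (hasDerivAt_id y)).const_mul 2
        have hdiv := hnum.div hden (by positivity)
        have hlog : HasDerivAt (fun y : ℝ => Real.log (1 + y)) (1 / (1 + y)) y := by
          have : HasDerivAt (fun y : ℝ => 1 + y) 1 y := by
            exact ((hasDerivAt_const y 1).add (hasDerivAt_id y)).congr_deriv (by ring)
          simpa [one_div] using this.log (ne_of_gt h1y)
        have := hdiv.sub hlog
        refine this.congr_deriv ?_
        have h1y' : (1 + y) ≠ 0 := ne_of_gt h1y
        field_simp
        ring
      rw [hd.deriv]
      positivity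
  have h0 : f 0 = 0 := by simp [hf]
  have := key (self_mem_Ici) (le_of_lt hx : (0:ℝ) ≤ x) hx
  rw [h0] at this
  have : 0 < x * (2 + x) / (2 * (1 + x)) - Real.log (1 + x) := this
  linarith

theorem captive_surplus_gt_comparison_gain (η : ℝ) (hη : 0 < η) :
    1 - η * Real.log (1 + 1 / η) >
      η * ((1 + 2 * η) * Real.log (1 + 1 / η) - 2) := by
  have hx : (0:ℝ) < 1 / η := by positivity
  have h := log_lt_sharp hx
  have hb : (1/η) * (2 + 1/η) / (2 * (1 + 1/η)) = (2*η + 1) / (2*η*(η+1)) := by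
    field_simp
  rw [hb] at h
  have hpos : (0:ℝ) < 2*η*(η+1) := by nlinarith
  have h2 : Real.log (1 + 1/η) * (2*η*(η+1)) < 2*η + 1 := (lt_div_iff₀ hpos).mp h
  nlinarith [h2]
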